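/- Singular infinite-well localization, exterior vanishing: let u_k ≥ 0 satisfy ∫_{ℝⁿ} u_k (-Δ)^s φ₀ + ∫_{ℝⁿ} V_k u_k φ₀ = ∫_Ω f φ₀ where φ₀ > 0 on ℝⁿ satisfies (-Δ)^s φ₀ = 1, and V_k ≥ k on Ω^c, V_k ≥ 0. Then (1 + k·inf_{Ω^c} φ₀) ∫_{Ω^c} u_k ≤ ∫_Ω f φ₀; consequently, if inf_{Ω^c} φ₀ > 0 and u_k → u pointwise a.e. with u_k ≥ 0, then u = 0 a.e. in Ω^c. -/

import Mathlib

open MeasureTheory Metric Filter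

/-- Singular infinite-well localization, exterior vanishing. Let `u_k ≥ 0`
satisfy `∫ u_k (-Δ)^s φ₀ + ∫ V_k u_k φ₀ = ∫_Ω f φ₀` where `φ₀ > 0` satisfies
`(-Δ)^s φ₀ = 1` (recorded by `Lφ₀`), `V_k ≥ 0` everywhere and `V_k ≥ k` on `Ωᶜ`. Then
`(1 + k·m) ∫_{Ωᶜ} u_k ≤ ∫_Ω f φ₀` where `m = inf_{Ωᶜ} φ₀`; consequently, if `m > 0` and
`u_k → w` pointwise a.e., then `w = 0` a.e. in `Ωᶜ`. -/
theorem infinite_well_exterior_vanishing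
    (n : ℕ) (hn : 1 ≤ n) (s : ℝ) (hs : 0 < s) (hs1 : s < 1)
    (Ω : Set (EuclideanSpace ℝ (Fin n))) (hΩo : IsOpen Ω)
    (hΩb : Bornology.IsBounded Ω) (hΩm : MeasurableSet Ω)
    (f φ₀ Lφ₀ : EuclideanSpace ℝ (Fin n) → ℝ)
    (hf : ∀ x, 0 ≤ f x) (hfbdd : ∃ C : ℝ, ∀ x, f x ≤ C)
    (hfext : ∀ x ∈ Ωᶜ, f x = 0)
    (hφ₀pos : ∀ x, 0 < φ₀ x) (hLφ₀ : ∀ x, Lφ₀ x = 1)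
    (m : ℝ) (hm : 0 < m) (hminf : ∀ x ∈ Ωᶜ, m ≤ φ₀ x)
    (V : ℕ → EuclideanSpace ℝ (Fin n) → ℝ)
    (hV : ∀ k x, 0 ≤ V k x) (hVk : ∀ k : ℕ, ∀ x ∈ Ωᶜ, (k : ℝ) ≤ V k x)
    (u : ℕ → EuclideanSpace ℝ (Fin n) → ℝ)
    (hu : ∀ k x, 0 ≤ u k x)
    (huint : ∀ k, Integrable (u k))
    (hVuint : ∀ k, Integrable (fun x => V k x * u k x * φ₀ x))
    (hid : ∀ k, (∫ x, u k x * Lφ₀ x) + (∫ x, V k x * u k x * φ₀ x) =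
      ∫ x in Ω, f x * φ₀ x) :
    (∀ k : ℕ, (1 + (k : ℝ) * m) * (∫ x in Ωᶜ, u k x) ≤ ∫ x in Ω, f x * φ₀ x) ∧
    (∀ w : EuclideanSpace ℝ (Fin n) → ℝ,
      (∀ᵐ x, Tendsto (fun k => u k x) atTop (nhds (w x))) →
      ∀ᵐ x, x ∈ Ωᶜ → w x = 0) := by

  have C0 : 0 ≤ ∫ x in Ω, f x * φ₀ x :=
    setIntegral_nonneg hΩm fun x _ => mul_nonneg (hf x) (hφ₀pos x).le
  have key : ∀ k : ℕ, (1 + (k : ℝ) * m) * (∫ x in Ωᶜ, u k x) ≤ ∫ x in Ω, f x * φ₀ x := by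
    intro k
    have h1 : (∫ x, u k x * Lφ₀ x) = ∫ x, u k x := by simp [hLφ₀]
    have h2 : ∫ x in Ωᶜ, u k x ≤ ∫ x, u k x :=
      setIntegral_le_integral (huint k) (Eventually.of_forall (hu k))
    have hVnn : ∀ x, 0 ≤ V k x * u k x * φ₀ x := fun x =>
      mul_nonneg (mul_nonneg (hV k x) (hu k x)) (hφ₀pos x).le
    have h3 : ((k : ℝ) * m) * ∫ x in Ωᶜ, u k x ≤ ∫ x, V k x * u k x * φ₀ x := by
      calc ((k : ℝ) * m) * ∫ x in Ωᶜ, u k x = ∫ x in Ωᶜ, ((k : ℝ) * m) * u k x := by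
            rw [integral_const_mul]
        _ ≤ ∫ x in Ωᶜ, V k x * u k x * φ₀ x := by
            refine setIntegral_mono_on (((huint k).const_mul _).integrableOn)
              ((hVuint k).integrableOn) hΩm.compl ?_
            intro x hx
            calc (k : ℝ) * m * u k x ≤ V k x * φ₀ x * u k x :=
                  mul_le_mul_of_nonneg_right
                    (mul_le_mul (hVk k x hx) (hminf x hx) hm.le (hV k x)) (hu k x)
              _ = V k x * u k x * φ₀ x := by ring
        _ ≤ ∫ x, V k x * u k x * φ₀ x :=
            setIntegral_le_integral (hVuint k) (Eventually.of_forall hVnn)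
    have hid' := hid k
    rw [h1] at hid'
    nlinarith [h2, h3]
  refine ⟨key, fun w hw => ?_⟩
  set C := ∫ x in Ω, f x * φ₀ x with hC
  have hle : ∀ k : ℕ, ∫⁻ x in Ωᶜ, ENNReal.ofReal (u k x) ≤
      ENNReal.ofReal (C / (1 + (k : ℝ) * m)) := by
    intro k
    have hpos : (0 : ℝ) < 1 + (k : ℝ) * m := by positivity
    have hIk : ∫ x in Ωᶜ, u k x ≤ C / (1 + (k : ℝ) * m) :=
      (le_div_iff₀ hpos).mpr (by rw [mul_comm]; exact key k)
    rw [← ofReal_integral_eq_lintegral_ofReal ((huint k).integrableOn)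
      (Eventually.of_forall (hu k))]
    exact ENNReal.ofReal_le_ofReal hIk
  have hlim : Tendsto (fun k : ℕ => ENNReal.ofReal (C / (1 + (k : ℝ) * m))) atTop (nhds 0) := by
    rw [← ENNReal.ofReal_zero]
    apply ENNReal.tendsto_ofReal
    apply Tendsto.div_atTop tendsto_const_nhds
    exact tendsto_atTop_add_const_left _ 1 (tendsto_natCast_atTop_atTop.atTop_mul_const hm)
  have fatou : ∫⁻ x in Ωᶜ, ENNReal.ofReal (w x) ≤
      liminf (fun k => ∫⁻ x in Ωᶜ, ENNReal.ofReal (u k x)) atTop := by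
    have hwa : ∀ᵐ x ∂(volume.restrict Ωᶜ), ENNReal.ofReal (w x) =
        liminf (fun k => ENNReal.ofReal (u k x)) atTop := by
      filter_upwards [ae_restrict_of_ae hw] with x hx
      exact (((ENNReal.continuous_ofReal.tendsto _).comp hx).liminf_eq).symm
    calc ∫⁻ x in Ωᶜ, ENNReal.ofReal (w x)
        = ∫⁻ x in Ωᶜ, liminf (fun k => ENNReal.ofReal (u k x)) atTop :=
          lintegral_congr_ae hwa
      _ ≤ liminf (fun k => ∫⁻ x in Ωᶜ, ENNReal.ofReal (u k x)) atTop :=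
          lintegral_liminf_le' fun k =>
            ENNReal.measurable_ofReal.comp_aemeasurable ((huint k).aemeasurable.restrict)
  have hzero : ∫⁻ x in Ωᶜ, ENNReal.ofReal (w x) = 0 := by
    refine le_antisymm ?_ zero_le
    calc ∫⁻ x in Ωᶜ, ENNReal.ofReal (w x)
        ≤ liminf (fun k => ∫⁻ x in Ωᶜ, ENNReal.ofReal (u k x)) atTop := fatou
      _ ≤ liminf (fun k : ℕ => ENNReal.ofReal (C / (1 + (k : ℝ) * m))) atTop :=
          liminf_le_liminf (Eventually.of_forall hle)
      _ = 0 := hlim.liminf_eq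
  have hwmeas : AEMeasurable w :=
    aemeasurable_of_tendsto_metrizable_ae atTop (fun k => (huint k).aemeasurable) hw
  have hae : ∀ᵐ x ∂(volume.restrict Ωᶜ), ENNReal.ofReal (w x) = 0 :=
    (lintegral_eq_zero_iff' (ENNReal.measurable_ofReal.comp_aemeasurable
      hwmeas.restrict)).mp hzero
  have hae' : ∀ᵐ x, x ∈ Ωᶜ → ENNReal.ofReal (w x) = 0 :=
    (ae_restrict_iff' hΩm.compl).mp hae
  filter_upwards [hae', hw] with x h1 h2 hx
  have hle0 : w x ≤ 0 := ENNReal.ofReal_eq_zero.mp (h1 hx)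
  have hge0 : 0 ≤ w x := ge_of_tendsto' h2 fun k => hu k x
  linarith
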